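/- Let Σ be an oriented smooth surface in S⁶ and let C be the cone over Σ in ℝ⁷. The following are equivalent: (i) Σ is a J-holomorphic curve in (S⁶, J); (ii) C is an associative submanifold of (ℝ⁷, φₑ); (iii) Re Ω(u,v,w) = 0 for all u,v ∈ TΣ and w ∈ TS⁶; (iv) u ×_{S⁶} v = 0 for all u,v ∈ TΣ; (v) u × v ∈ NΣ for all u ∈ TΣ and v ∈ NΣ. -/

import Mathlib

open scoped RealInnerProductSpace

noncomputable section

/-- ℝ⁷ with its Euclidean inner product. -/
abbrev E7 : Type := EuclideanSpace ℝ (Fin 7)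

/-- (e^i ∧ e^j ∧ e^k)(x, y, z). -/
def tripleDet (i j k : Fin 7) (x y z : E7) : ℝ :=
  Matrix.det !![x i, y i, z i; x j, y j, z j; x k, y k, z k]

/-- The standard G₂ 3-form
φₑ = e^{123} − e^{145} − e^{167} − e^{246} − e^{275} − e^{347} − e^{356}
(indices shifted to start from 0). -/
def phiE (x y z : E7) : ℝ :=
  tripleDet 0 1 2 x y z - tripleDet 0 3 4 x y z - tripleDet 0 5 6 x y z -
    tripleDet 1 3 5 x y z - tripleDet 1 6 4 x y z - tripleDet 2 3 6 x y z -
    tripleDet 2 4 5 x y z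

/-- The octonionic cross product on ℝ⁷ = Im 𝕆, characterized by ⟨u × v, w⟩ = φₑ(u,v,w). -/
def cross7 (u v : E7) : E7 :=
  (EuclideanSpace.equiv (Fin 7) ℝ).symm fun k => phiE u v (EuclideanSpace.single k 1)

/-- Tangential projection onto T_x S⁶ (for ‖x‖ = 1): w ↦ w − ⟨x,w⟩x. -/
def tproj (x w : E7) : E7 := w - ⟪x, w⟫ • x

/-- The associator of ℝ⁷: [u,v,w] = (u×v)×w + ⟨v,w⟩u − ⟨u,w⟩v. -/
def assoc7 (u v w : E7) : E7 :=
  cross7 (cross7 u v) w + ⟪v, w⟫ • u - ⟪u, w⟫ • v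

/-- The J-antilinear multiplication ×_{S⁶}: the tangential projection of the cross product,
equivalently g(u ×_{S⁶} v, w) = Re Ω(u,v,w), equivalently u ×_{S⁶} v = (∇_u J)v. -/
def crossS6 (x u v : E7) : E7 := tproj x (cross7 u v)

/-- Re Ω at a point of S⁶, evaluated on tangent vectors: from φₑ = r² dr ∧ ω + r³ Re Ω one has
Re Ω(u,v,w) = φₑ(u,v,w) for u, v, w tangent to S⁶. -/
def ReOmega (u v w : E7) : ℝ := phiE u v w

lemma E7ext {a b : E7} (h0 : a 0 = b 0) (h1 : a 1 = b 1) (h2 : a 2 = b 2) (h3 : a 3 = b 3)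
    (h4 : a 4 = b 4) (h5 : a 5 = b 5) (h6 : a 6 = b 6) : a = b := by
  ext k; fin_cases k <;> assumption

lemma phiE_expand (x y z : E7) : phiE x y z =
  (x 0 * (y 1 * z 2 - z 1 * y 2) - y 0 * (x 1 * z 2 - z 1 * x 2) + z 0 * (x 1 * y 2 - y 1 * x 2))
  - (x 0 * (y 3 * z 4 - z 3 * y 4) - y 0 * (x 3 * z 4 - z 3 * x 4) + z 0 * (x 3 * y 4 - y 3 * x 4))
  - (x 0 * (y 5 * z 6 - z 5 * y 6) - y 0 * (x 5 * z 6 - z 5 * x 6) + z 0 * (x 5 * y 6 - y 5 * x 6))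
  - (x 1 * (y 3 * z 5 - z 3 * y 5) - y 1 * (x 3 * z 5 - z 3 * x 5) + z 1 * (x 3 * y 5 - y 3 * x 5))
  - (x 1 * (y 6 * z 4 - z 6 * y 4) - y 1 * (x 6 * z 4 - z 6 * x 4) + z 1 * (x 6 * y 4 - y 6 * x 4))
  - (x 2 * (y 3 * z 6 - z 3 * y 6) - y 2 * (x 3 * z 6 - z 3 * x 6) + z 2 * (x 3 * y 6 - y 3 * x 6))
  - (x 2 * (y 4 * z 5 - z 4 * y 5) - y 2 * (x 4 * z 5 - z 4 * x 5) + z 2 * (x 4 * y 5 - y 4 * x 5)) := by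
  simp [phiE, tripleDet, Matrix.det_fin_three]; ring

lemma cross7_0 (u v : E7) : cross7 u v 0 = u 1*v 2 - u 2*v 1 - (u 3*v 4 - u 4*v 3) - (u 5*v 6 - u 6*v 5) := by
  show phiE u v (EuclideanSpace.single 0 1) = _
  rw [phiE_expand]; simp [EuclideanSpace.single_apply]; ring
lemma cross7_1 (u v : E7) : cross7 u v 1 = u 2*v 0 - u 0*v 2 - (u 3*v 5 - u 5*v 3) - (u 6*v 4 - u 4*v 6) := by
  show phiE u v (EuclideanSpace.single 1 1) = _
  rw [phiE_expand]; simp [EuclideanSpace.single_apply]; ring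
lemma cross7_2 (u v : E7) : cross7 u v 2 = u 0*v 1 - u 1*v 0 - (u 3*v 6 - u 6*v 3) - (u 4*v 5 - u 5*v 4) := by
  show phiE u v (EuclideanSpace.single 2 1) = _
  rw [phiE_expand]; simp [EuclideanSpace.single_apply]; ring
lemma cross7_3 (u v : E7) : cross7 u v 3 = u 0*v 4 - u 4*v 0 + (u 1*v 5 - u 5*v 1) + (u 2*v 6 - u 6*v 2) := by
  show phiE u v (EuclideanSpace.single 3 1) = _
  rw [phiE_expand]; simp [EuclideanSpace.single_apply]; ring
lemma cross7_4 (u v : E7) : cross7 u v 4 = u 3*v 0 - u 0*v 3 + (u 6*v 1 - u 1*v 6) + (u 2*v 5 - u 5*v 2) := by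
  show phiE u v (EuclideanSpace.single 4 1) = _
  rw [phiE_expand]; simp [EuclideanSpace.single_apply]; ring
lemma cross7_5 (u v : E7) : cross7 u v 5 = u 0*v 6 - u 6*v 0 + (u 3*v 1 - u 1*v 3) + (u 4*v 2 - u 2*v 4) := by
  show phiE u v (EuclideanSpace.single 5 1) = _
  rw [phiE_expand]; simp [EuclideanSpace.single_apply]; ring
lemma cross7_6 (u v : E7) : cross7 u v 6 = u 5*v 0 - u 0*v 5 + (u 1*v 4 - u 4*v 1) + (u 3*v 2 - u 2*v 3) := by
  show phiE u v (EuclideanSpace.single 6 1) = _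
  rw [phiE_expand]; simp [EuclideanSpace.single_apply]; ring

lemma inner_expand (u v : E7) : ⟪u, v⟫ = u 0*v 0 + u 1*v 1 + u 2*v 2 + u 3*v 3 + u 4*v 4 + u 5*v 5 + u 6*v 6 := by
  simp [PiLp.inner_apply, Fin.sum_univ_seven]; ring

lemma inner_cross (u v w : E7) : ⟪cross7 u v, w⟫ = phiE u v w := by
  rw [inner_expand, phiE_expand, cross7_0, cross7_1, cross7_2, cross7_3, cross7_4, cross7_5, cross7_6]; ring

lemma phiE_cyclic (u v w : E7) : phiE u v w = phiE w u v := by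
  rw [phiE_expand, phiE_expand]; ring
lemma phiE_swap23 (u v w : E7) : phiE u v w = -phiE u w v := by
  rw [phiE_expand, phiE_expand]; ring
lemma phiE_alt23 (u v : E7) : phiE u v v = 0 := by rw [phiE_expand]; ring
lemma phiE_add3 (u v a b : E7) : phiE u v (a + b) = phiE u v a + phiE u v b := by
  rw [phiE_expand, phiE_expand, phiE_expand]
  simp only [PiLp.add_apply]; ring
lemma phiE_planar (a b c d e f : ℝ) (p q : E7) :
    phiE (a•p + b•q) (c•p + d•q) (e•p + f•q) = 0 := by
  rw [phiE_expand]
  simp only [PiLp.add_apply, PiLp.smul_apply, smul_eq_mul]; ring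

lemma cross7_self (u : E7) : cross7 u u = 0 := by
  apply E7ext <;> simp only [cross7_0, cross7_1, cross7_2, cross7_3, cross7_4, cross7_5, cross7_6, PiLp.zero_apply] <;> ring
lemma cross7_zero_left (v : E7) : cross7 0 v = 0 := by
  apply E7ext <;> simp only [cross7_0, cross7_1, cross7_2, cross7_3, cross7_4, cross7_5, cross7_6, PiLp.zero_apply] <;> ring
lemma cross7_anticomm (u v : E7) : cross7 u v = -cross7 v u := by
  apply E7ext <;> simp only [cross7_0, cross7_1, cross7_2, cross7_3, cross7_4, cross7_5, cross7_6, PiLp.neg_apply] <;> ring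
lemma cross7_neg_right (u v : E7) : cross7 u (-v) = -cross7 u v := by
  apply E7ext <;> simp only [cross7_0, cross7_1, cross7_2, cross7_3, cross7_4, cross7_5, cross7_6, PiLp.neg_apply] <;> ring
lemma cross7_add_left (u u' v : E7) : cross7 (u + u') v = cross7 u v + cross7 u' v := by
  apply E7ext <;> simp only [cross7_0, cross7_1, cross7_2, cross7_3, cross7_4, cross7_5, cross7_6, PiLp.add_apply] <;> ring
lemma cross7_add_right (u v v' : E7) : cross7 u (v + v') = cross7 u v + cross7 u v' := by
  apply E7ext <;> simp only [cross7_0, cross7_1, cross7_2, cross7_3, cross7_4, cross7_5, cross7_6, PiLp.add_apply] <;> ring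
lemma cross7_smul_left (c : ℝ) (u v : E7) : cross7 (c • u) v = c • cross7 u v := by
  apply E7ext <;> simp only [cross7_0, cross7_1, cross7_2, cross7_3, cross7_4, cross7_5, cross7_6, PiLp.smul_apply, smul_eq_mul] <;> ring
lemma cross7_smul_right (c : ℝ) (u v : E7) : cross7 u (c • v) = c • cross7 u v := by
  apply E7ext <;> simp only [cross7_0, cross7_1, cross7_2, cross7_3, cross7_4, cross7_5, cross7_6, PiLp.smul_apply, smul_eq_mul] <;> ring
lemma cross7_comb (a b c d : ℝ) (p q : E7) :
    cross7 (a•p + b•q) (c•p + d•q) = (a*d - b*c) • cross7 p q := by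
  apply E7ext <;> simp only [cross7_0, cross7_1, cross7_2, cross7_3, cross7_4, cross7_5, cross7_6, PiLp.add_apply, PiLp.smul_apply, smul_eq_mul] <;> ring

lemma triple_id (u v : E7) : cross7 u (cross7 u v) = ⟪u,v⟫ • u - ⟪u,u⟫ • v := by
  apply E7ext <;>
    simp only [cross7_0, cross7_1, cross7_2, cross7_3, cross7_4, cross7_5, cross7_6,
      PiLp.sub_apply, PiLp.smul_apply, smul_eq_mul, inner_expand] <;> ring

lemma norm_cross (u v : E7) : ⟪cross7 u v, cross7 u v⟫ = ⟪u,u⟫ * ⟪v,v⟫ - ⟪u,v⟫ * ⟪u,v⟫ := by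
  simp only [inner_expand, cross7_0, cross7_1, cross7_2, cross7_3, cross7_4, cross7_5, cross7_6]; ring

lemma tproj_smul (x : E7) (c : ℝ) (w : E7) : tproj x (c • w) = c • tproj x w := by
  simp only [tproj, real_inner_smul_right, smul_sub, smul_smul]

lemma tproj_self (x : E7) (hxx : ⟪x,x⟫ = 1) : tproj x x = 0 := by
  simp only [tproj, hxx, one_smul, sub_self]

lemma assoc7_add1 (u u' v w : E7) : assoc7 (u + u') v w = assoc7 u v w + assoc7 u' v w := by
  simp only [assoc7, cross7_add_left, inner_add_left, add_smul]; module
lemma assoc7_add2 (u v v' w : E7) : assoc7 u (v + v') w = assoc7 u v w + assoc7 u v' w := by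
  simp only [assoc7, cross7_add_left, cross7_add_right, inner_add_left, add_smul]; module
lemma assoc7_add3 (u v w w' : E7) : assoc7 u v (w + w') = assoc7 u v w + assoc7 u v w' := by
  simp only [assoc7, cross7_add_right, inner_add_right, add_smul]; module
lemma assoc7_smul1 (c : ℝ) (u v w : E7) : assoc7 (c • u) v w = c • assoc7 u v w := by
  simp only [assoc7, cross7_smul_left, real_inner_smul_left, smul_smul, mul_comm]
  module
lemma assoc7_smul2 (c : ℝ) (u v w : E7) : assoc7 u (c • v) w = c • assoc7 u v w := by
  simp only [assoc7, cross7_smul_left, cross7_smul_right, real_inner_smul_left, smul_smul, mul_comm]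
  module
lemma assoc7_smul3 (c : ℝ) (u v w : E7) : assoc7 u v (c • w) = c • assoc7 u v w := by
  simp only [assoc7, cross7_smul_right, real_inner_smul_right, smul_smul, mul_comm]
  module

lemma assoc7_alt12 (u w : E7) : assoc7 u u w = 0 := by
  simp [assoc7, cross7_self, cross7_zero_left]
lemma assoc7_alt23 (u v : E7) : assoc7 u v v = 0 := by
  have h : cross7 (cross7 u v) v = ⟪u,v⟫ • v - ⟪v,v⟫ • u := by
    rw [cross7_anticomm (cross7 u v) v, cross7_anticomm u v, cross7_neg_right, triple_id,
      real_inner_comm v u]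
    module
  rw [assoc7, h]; module
lemma assoc7_swap12 (u v w : E7) : assoc7 u v w = -assoc7 v u w := by
  have h := assoc7_alt12 (u + v) w
  rw [assoc7_add1, assoc7_add2, assoc7_add2, assoc7_alt12, assoc7_alt12] at h
  have : assoc7 u v w + assoc7 v u w = 0 := by
    rw [← h]; abel
  linear_combination (norm := module) this
lemma assoc7_swap23 (u v w : E7) : assoc7 u v w = -assoc7 u w v := by
  have h := assoc7_alt23 u (v + w)
  rw [assoc7_add2, assoc7_add3, assoc7_add3, assoc7_alt23, assoc7_alt23] at h
  have : assoc7 u v w + assoc7 u w v = 0 := by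
    rw [← h]; abel
  linear_combination (norm := module) this
lemma assoc7_alt13 (u v : E7) : assoc7 u v u = 0 := by
  rw [assoc7_swap12, assoc7_alt23, neg_zero]

lemma assoc7_planar (a b c d e f : ℝ) (p q : E7) :
    assoc7 (a•p + b•q) (c•p + d•q) (e•p + f•q) = 0 := by
  simp [assoc7_add1, assoc7_add2, assoc7_add3, assoc7_smul1, assoc7_smul2, assoc7_smul3,
    assoc7_alt12, assoc7_alt23, assoc7_alt13]

section Implications

variable (x : E7) (T : Submodule ℝ E7) (u₀ v₀ : E7)

lemma imp14 (hxx : ⟪x,x⟫ = 1) (hTtan : ∀ t ∈ T, ⟪x,t⟫ = 0)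
    (hu₀ : u₀ ∈ T) (hv₀ : v₀ ∈ T) (hnu : ⟪u₀,u₀⟫ = 1) (hnv : ⟪v₀,v₀⟫ = 1)
    (huv : ⟪u₀,v₀⟫ = 0) (hrep : ∀ t ∈ T, t = ⟪u₀,t⟫ • u₀ + ⟪v₀,t⟫ • v₀)
    (h1 : ∀ t ∈ T, cross7 x t ∈ T) :
    ∀ u ∈ T, ∀ v ∈ T, crossS6 x u v = 0 := by
  have hxu0 : ⟪x,u₀⟫ = 0 := hTtan u₀ hu₀
  have hJT : cross7 x u₀ ∈ T := h1 u₀ hu₀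
  have h0 : ⟪u₀, cross7 x u₀⟫ = 0 := by
    rw [real_inner_comm, inner_cross]; exact phiE_alt23 x u₀
  have hJ : cross7 x u₀ = ⟪v₀, cross7 x u₀⟫ • v₀ := by
    have h := hrep _ hJT; rw [h0, zero_smul, zero_add] at h; exact h
  set c := ⟪v₀, cross7 x u₀⟫ with hcdef
  have hcc : c * c = 1 := by
    have hn := norm_cross x u₀
    rw [hxx, hnu, hxu0] at hn
    rw [hJ, real_inner_smul_left, real_inner_smul_right, hnv] at hn
    linear_combination hn
  have hXU : cross7 u₀ (cross7 x u₀) = x := by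
    rw [cross7_anticomm x u₀, cross7_neg_right, triple_id, real_inner_comm x u₀, hxu0, hnu]
    module
  have hmain : tproj x (cross7 u₀ v₀) = 0 := by
    have h2 : c • cross7 u₀ v₀ = x := by rw [← cross7_smul_right, ← hJ, hXU]
    have h3 : c • tproj x (cross7 u₀ v₀) = 0 := by rw [← tproj_smul, h2, tproj_self x hxx]
    have hc0 : c ≠ 0 := by intro h; rw [h, mul_zero] at hcc; norm_num at hcc
    exact (smul_eq_zero.mp h3).resolve_left hc0
  intro u hu v hv
  show tproj x (cross7 u v) = 0
  rw [hrep u hu, hrep v hv, cross7_comb, tproj_smul, hmain, smul_zero]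

lemma imp41 (hxx : ⟪x,x⟫ = 1) (hTtan : ∀ t ∈ T, ⟪x,t⟫ = 0)
    (hu₀ : u₀ ∈ T) (hv₀ : v₀ ∈ T) (hnu : ⟪u₀,u₀⟫ = 1) (hnv : ⟪v₀,v₀⟫ = 1)
    (huv : ⟪u₀,v₀⟫ = 0) (hrep : ∀ t ∈ T, t = ⟪u₀,t⟫ • u₀ + ⟪v₀,t⟫ • v₀)
    (h4 : ∀ u ∈ T, ∀ v ∈ T, crossS6 x u v = 0) :
    ∀ t ∈ T, cross7 x t ∈ T := by
  have hc' := h4 u₀ hu₀ v₀ hv₀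
  unfold crossS6 tproj at hc'
  have hc : cross7 u₀ v₀ = ⟪x, cross7 u₀ v₀⟫ • x := sub_eq_zero.mp hc'
  set l := ⟪x, cross7 u₀ v₀⟫ with hldef
  have hll : l * l = 1 := by
    have hn := norm_cross u₀ v₀
    rw [hnu, hnv, huv] at hn
    rw [hc, real_inner_smul_left, real_inner_smul_right, hxx] at hn
    linear_combination hn
  have e1 : cross7 u₀ (cross7 u₀ v₀) = -v₀ := by
    rw [triple_id, huv, hnu]; module
  have e2 : l • cross7 x u₀ = v₀ := by
    have h5 : cross7 u₀ (l • x) = -v₀ := by rw [← hc, e1]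
    rw [cross7_smul_right, cross7_anticomm u₀ x, smul_neg] at h5
    linear_combination (norm := module) -h5
  have e2' : cross7 x u₀ = l • v₀ := by
    calc cross7 x u₀ = (l*l) • cross7 x u₀ := by rw [hll, one_smul]
    _ = l • (l • cross7 x u₀) := by rw [mul_smul]
    _ = l • v₀ := by rw [e2]
  have f1 : cross7 v₀ (cross7 v₀ u₀) = -u₀ := by
    rw [triple_id, real_inner_comm u₀ v₀, huv, hnv]; module
  have f2 : cross7 v₀ (cross7 u₀ v₀) = u₀ := by
    rw [cross7_anticomm u₀ v₀, cross7_neg_right, f1, neg_neg]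
  have f3 : l • cross7 x v₀ = -u₀ := by
    have h5 : cross7 v₀ (l • x) = u₀ := by rw [← hc, f2]
    rw [cross7_smul_right, cross7_anticomm v₀ x, smul_neg] at h5
    linear_combination (norm := module) -h5
  have f4 : cross7 x v₀ = l • (-u₀) := by
    calc cross7 x v₀ = (l*l) • cross7 x v₀ := by rw [hll, one_smul]
    _ = l • (l • cross7 x v₀) := by rw [mul_smul]
    _ = l • (-u₀) := by rw [f3]
  intro t ht
  rw [hrep t ht, cross7_add_right, cross7_smul_right, cross7_smul_right]
  refine T.add_mem (T.smul_mem _ ?_) (T.smul_mem _ ?_)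
  · rw [e2']; exact T.smul_mem _ hv₀
  · rw [f4]; exact T.smul_mem _ (T.neg_mem hu₀)

lemma imp43 (h4 : ∀ u ∈ T, ∀ v ∈ T, crossS6 x u v = 0) :
    ∀ u ∈ T, ∀ v ∈ T, ∀ w : E7, ⟪x, w⟫ = 0 → ReOmega u v w = 0 := by
  intro u hu v hv w hxw
  have h := h4 u hu v hv
  unfold crossS6 tproj at h
  have hc : cross7 u v = ⟪x, cross7 u v⟫ • x := sub_eq_zero.mp h
  unfold ReOmega
  rw [← inner_cross, hc, real_inner_smul_left, hxw, mul_zero]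

lemma imp34 (hxx : ⟪x,x⟫ = 1)
    (h3 : ∀ u ∈ T, ∀ v ∈ T, ∀ w : E7, ⟪x, w⟫ = 0 → ReOmega u v w = 0) :
    ∀ u ∈ T, ∀ v ∈ T, crossS6 x u v = 0 := by
  intro u hu v hv
  show cross7 u v - ⟪x, cross7 u v⟫ • x = 0
  set w := cross7 u v - ⟪x, cross7 u v⟫ • x with hw
  have hxw : ⟪x,w⟫ = 0 := by
    rw [hw, inner_sub_right, real_inner_smul_right, hxx, mul_one, sub_self]
  have h := h3 u hu v hv w hxw
  unfold ReOmega at h; rw [← inner_cross] at h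
  have hww : ⟪w,w⟫ = 0 := by
    nth_rewrite 1 [hw]
    rw [inner_sub_left, real_inner_smul_left, hxw, h, mul_zero, sub_zero]
  exact inner_self_eq_zero.mp hww

lemma imp12 (hxx : ⟪x,x⟫ = 1) (hTtan : ∀ t ∈ T, ⟪x,t⟫ = 0)
    (hu₀ : u₀ ∈ T) (hv₀ : v₀ ∈ T)
    (hrep : ∀ t ∈ T, t = ⟪u₀,t⟫ • u₀ + ⟪v₀,t⟫ • v₀)
    (h1 : ∀ t ∈ T, cross7 x t ∈ T)
    (h4 : ∀ u ∈ T, ∀ v ∈ T, crossS6 x u v = 0) :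
    ∀ u ∈ Submodule.span ℝ {x} ⊔ T, ∀ v ∈ Submodule.span ℝ {x} ⊔ T,
      ∀ w ∈ Submodule.span ℝ {x} ⊔ T, assoc7 u v w = 0 := by
  have kx : ∀ s ∈ T, ∀ t ∈ T, assoc7 x s t = 0 := by
    intro s hs t ht
    have h' := h4 (cross7 x s) (h1 s hs) t ht
    unfold crossS6 tproj at h'
    have hcst : cross7 (cross7 x s) t = ⟪x, cross7 (cross7 x s) t⟫ • x := sub_eq_zero.mp h'
    have hco : ⟪x, cross7 (cross7 x s) t⟫ = -⟪s,t⟫ := by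
      rw [real_inner_comm, inner_cross, phiE_cyclic, ← inner_cross, triple_id, hTtan s hs, hxx]
      rw [inner_sub_left, real_inner_smul_left, real_inner_smul_left]
      ring
    unfold assoc7
    rw [hcst, hco, hTtan t ht]
    module
  have planarT : ∀ s ∈ T, ∀ t ∈ T, ∀ r ∈ T, assoc7 s t r = 0 := by
    intro s hs t ht r hr
    rw [hrep s hs, hrep t ht, hrep r hr]
    exact assoc7_planar _ _ _ _ _ _ u₀ v₀
  intro u hu v hv w hw
  obtain ⟨y1, hy1, s1, hs1, rfl⟩ := Submodule.mem_sup.mp hu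
  obtain ⟨a1, rfl⟩ := Submodule.mem_span_singleton.mp hy1
  obtain ⟨y2, hy2, s2, hs2, rfl⟩ := Submodule.mem_sup.mp hv
  obtain ⟨a2, rfl⟩ := Submodule.mem_span_singleton.mp hy2
  obtain ⟨y3, hy3, s3, hs3, rfl⟩ := Submodule.mem_sup.mp hw
  obtain ⟨a3, rfl⟩ := Submodule.mem_span_singleton.mp hy3
  have hA : assoc7 x s2 s3 = 0 := kx s2 hs2 s3 hs3
  have hB : assoc7 s1 x s3 = 0 := by
    rw [assoc7_swap12, kx s1 hs1 s3 hs3, neg_zero]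
  have hC : assoc7 s1 s2 x = 0 := by
    rw [assoc7_swap23, assoc7_swap12, kx s1 hs1 s2 hs2]; simp
  have hD : assoc7 s1 s2 s3 = 0 := planarT s1 hs1 s2 hs2 s3 hs3
  simp [assoc7_add1, assoc7_add2, assoc7_add3, assoc7_smul1, assoc7_smul2, assoc7_smul3,
    assoc7_alt12, assoc7_alt23, assoc7_alt13, hA, hB, hC, hD]

lemma imp24 (hxx : ⟪x,x⟫ = 1) (hTtan : ∀ t ∈ T, ⟪x,t⟫ = 0)
    (h2 : ∀ u ∈ Submodule.span ℝ {x} ⊔ T, ∀ v ∈ Submodule.span ℝ {x} ⊔ T,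
      ∀ w ∈ Submodule.span ℝ {x} ⊔ T, assoc7 u v w = 0) :
    ∀ u ∈ T, ∀ v ∈ T, crossS6 x u v = 0 := by
  intro u hu v hv
  have hx' : x ∈ Submodule.span ℝ {x} ⊔ T :=
    Submodule.mem_sup_left (Submodule.mem_span_singleton_self x)
  have h := h2 u (Submodule.mem_sup_right hu) v (Submodule.mem_sup_right hv) x hx'
  unfold assoc7 at h
  rw [real_inner_comm x v, hTtan v hv, real_inner_comm x u, hTtan u hu] at h
  have hcx : cross7 (cross7 u v) x = 0 := by simpa using h
  have hn := norm_cross (cross7 u v) x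
  rw [hcx, hxx, inner_zero_left] at hn
  show cross7 u v - ⟪x, cross7 u v⟫ • x = 0
  have expand : ⟪cross7 u v - ⟪x, cross7 u v⟫ • x, cross7 u v - ⟪x, cross7 u v⟫ • x⟫
      = ⟪cross7 u v, cross7 u v⟫ - ⟪x, cross7 u v⟫ * ⟪x, cross7 u v⟫ := by
    rw [inner_sub_left, inner_sub_right, inner_sub_right, real_inner_smul_left,
      real_inner_smul_left, real_inner_smul_right, real_inner_smul_right, hxx,
      real_inner_comm (cross7 u v) x]
    ring
  have hz : ⟪cross7 u v - ⟪x, cross7 u v⟫ • x, cross7 u v - ⟪x, cross7 u v⟫ • x⟫ = (0:ℝ) := by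
    rw [expand]; rw [real_inner_comm x (cross7 u v)] at hn; linarith [hn]
  exact inner_self_eq_zero.mp hz

lemma imp15 (hTtan : ∀ t ∈ T, ⟪x,t⟫ = 0)
    (h1 : ∀ t ∈ T, cross7 x t ∈ T)
    (h4 : ∀ u ∈ T, ∀ v ∈ T, crossS6 x u v = 0) :
    ∀ u ∈ T, ∀ v : E7, ⟪x, v⟫ = 0 → (∀ t ∈ T, ⟪t, v⟫ = 0) →
      ⟪x, cross7 u v⟫ = 0 ∧ ∀ t ∈ T, ⟪t, cross7 u v⟫ = 0 := by
  intro u hu v hxv hTv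
  constructor
  · rw [real_inner_comm, inner_cross, phiE_cyclic, ← inner_cross]
    exact hTv _ (h1 u hu)
  · intro t ht
    have h := h4 u hu t ht
    unfold crossS6 tproj at h
    have hct : cross7 u t = ⟪x, cross7 u t⟫ • x := sub_eq_zero.mp h
    rw [real_inner_comm, inner_cross, phiE_swap23, ← inner_cross, hct,
      real_inner_smul_left, hxv, mul_zero, neg_zero]

lemma imp53 (hTtan : ∀ t ∈ T, ⟪x,t⟫ = 0)
    (hu₀ : u₀ ∈ T) (hv₀ : v₀ ∈ T) (hnu : ⟪u₀,u₀⟫ = 1) (hnv : ⟪v₀,v₀⟫ = 1)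
    (huv : ⟪u₀,v₀⟫ = 0) (hrep : ∀ t ∈ T, t = ⟪u₀,t⟫ • u₀ + ⟪v₀,t⟫ • v₀)
    (h5 : ∀ u ∈ T, ∀ v : E7, ⟪x, v⟫ = 0 → (∀ t ∈ T, ⟪t, v⟫ = 0) →
      ⟪x, cross7 u v⟫ = 0 ∧ ∀ t ∈ T, ⟪t, cross7 u v⟫ = 0) :
    ∀ u ∈ T, ∀ v ∈ T, ∀ w : E7, ⟪x, w⟫ = 0 → ReOmega u v w = 0 := by
  intro u hu v hv w hxw
  set wn := w - (⟪u₀,w⟫ • u₀ + ⟪v₀,w⟫ • v₀) with hwn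
  have hxwn : ⟪x,wn⟫ = 0 := by
    rw [hwn, inner_sub_right, inner_add_right, real_inner_smul_right, real_inner_smul_right,
      hTtan u₀ hu₀, hTtan v₀ hv₀, hxw]
    ring
  have hun : ⟪u₀,wn⟫ = 0 := by
    rw [hwn, inner_sub_right, inner_add_right, real_inner_smul_right, real_inner_smul_right,
      hnu, huv]
    ring
  have hvn : ⟪v₀,wn⟫ = 0 := by
    rw [hwn, inner_sub_right, inner_add_right, real_inner_smul_right, real_inner_smul_right,
      hnv, real_inner_comm u₀ v₀, huv]
    ring
  have hTn : ∀ t ∈ T, ⟪t,wn⟫ = 0 := by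
    intro t ht
    rw [hrep t ht, inner_add_left, real_inner_smul_left, real_inner_smul_left, hun, hvn]
    ring
  have key := (h5 u hu wn hxwn hTn).2 v hv
  rw [real_inner_comm] at key
  unfold ReOmega
  have hsplit : w = (⟪u₀,w⟫ • u₀ + ⟪v₀,w⟫ • v₀) + wn := by rw [hwn]; abel
  rw [hsplit, phiE_add3]
  have t1 : phiE u v (⟪u₀,w⟫ • u₀ + ⟪v₀,w⟫ • v₀) = 0 := by
    rw [hrep u hu, hrep v hv]
    exact phiE_planar _ _ _ _ _ _ u₀ v₀
  have t2 : phiE u v wn = 0 := by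
    rw [phiE_swap23, ← inner_cross, key, neg_zero]
  rw [t1, t2, add_zero]

end Implications

/-- Let Σ be an oriented smooth surface in S⁶, with tangent plane T at a point x ∈ S⁶, and let
C be the cone over Σ, whose tangent plane at the ray through x is ℝx ⊕ T.  The following are
equivalent: (i) Σ is J-holomorphic at x (T is J-invariant); (ii) C is associative (the
associator vanishes on ℝx ⊕ T); (iii) Re Ω(u,v,w) = 0 for u,v ∈ T and w ∈ T_xS⁶;
(iv) u ×_{S⁶} v = 0 for u,v ∈ T; (v) u × v ∈ NΣ for u ∈ T and v ∈ N_xΣ ⊂ T_xS⁶. -/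
theorem statement4 (x : E7) (hx : ‖x‖ = 1) (T : Submodule ℝ E7)
    (hT2 : Module.finrank ℝ T = 2)
    (hTtan : ∀ t ∈ T, ⟪x, t⟫ = 0) :
    List.TFAE
      [(∀ t ∈ T, cross7 x t ∈ T),
       (∀ u ∈ Submodule.span ℝ {x} ⊔ T, ∀ v ∈ Submodule.span ℝ {x} ⊔ T,
          ∀ w ∈ Submodule.span ℝ {x} ⊔ T, assoc7 u v w = 0),
       (∀ u ∈ T, ∀ v ∈ T, ∀ w : E7, ⟪x, w⟫ = 0 → ReOmega u v w = 0),
       (∀ u ∈ T, ∀ v ∈ T, crossS6 x u v = 0),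
       (∀ u ∈ T, ∀ v : E7, ⟪x, v⟫ = 0 → (∀ t ∈ T, ⟪t, v⟫ = 0) →
          ⟪x, cross7 u v⟫ = 0 ∧ ∀ t ∈ T, ⟪t, cross7 u v⟫ = 0)] := by
  have hxx : ⟪x,x⟫ = 1 := by rw [real_inner_self_eq_norm_mul_norm, hx, one_mul]
  obtain ⟨u₀, hu₀, v₀, hv₀, hnu, hnv, huv, hrep⟩ :
      ∃ u₀ ∈ T, ∃ v₀ ∈ T, ⟪u₀,u₀⟫ = 1 ∧ ⟪v₀,v₀⟫ = 1 ∧ ⟪u₀,v₀⟫ = 0 ∧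
        ∀ t ∈ T, t = ⟪u₀,t⟫ • u₀ + ⟪v₀,t⟫ • v₀ := by
    let b : OrthonormalBasis (Fin 2) ℝ T := (stdOrthonormalBasis ℝ T).reindex (finCongr hT2)
    have hb := orthonormal_iff_ite.mp b.orthonormal
    refine ⟨(b 0 : E7), (b 0).2, (b 1 : E7), (b 1).2, ?_, ?_, ?_, ?_⟩
    · have := hb 0 0; rw [if_pos rfl] at this; exact this
    · have := hb 1 1; rw [if_pos rfl] at this; exact this
    · have := hb 0 1; rw [if_neg (by decide)] at this; exact this
    · intro t ht
      have h := b.sum_repr' ⟨t, ht⟩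
      rw [Fin.sum_univ_two] at h
      have := congrArg (Subtype.val) h.symm
      simpa [Submodule.coe_inner] using this
  tfae_have 1 → 4 := imp14 x T u₀ v₀ hxx hTtan hu₀ hv₀ hnu hnv huv hrep
  tfae_have 4 → 1 := imp41 x T u₀ v₀ hxx hTtan hu₀ hv₀ hnu hnv huv hrep
  tfae_have 4 → 3 := imp43 x T
  tfae_have 3 → 4 := imp34 x T hxx
  tfae_have 1 → 2 := fun h1 =>
    imp12 x T u₀ v₀ hxx hTtan hu₀ hv₀ hrep h1
      (imp14 x T u₀ v₀ hxx hTtan hu₀ hv₀ hnu hnv huv hrep h1)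
  tfae_have 2 → 4 := imp24 x T hxx hTtan
  tfae_have 1 → 5 := fun h1 =>
    imp15 x T hTtan h1 (imp14 x T u₀ v₀ hxx hTtan hu₀ hv₀ hnu hnv huv hrep h1)
  tfae_have 5 → 3 := imp53 x T u₀ v₀ hTtan hu₀ hv₀ hnu hnv huv hrep
  tfae_finish
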